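/- Let (X, Σ, μ) be a measure space with μ(X) < ∞ and let k ≥ 1. Let f₁, …, f_k : X → ℝ be nonnegative measurable functions that are μ-a.e. pairwise correlated, and assume 0 < ∫_X f_i dμ < ∞ for every i = 1, …, k. Then equality μ(X)^{k−1} · ∫_X ∏_{i=1}^k f_i dμ = ∏_{i=1}^k ∫_X f_i dμ holds if and only if at least k − 1 of the functions are μ-a.e. constant, i.e. there exists an index i₀ such that for every i ≠ i₀ the function f_i is μ-a.e. equal to a constant. -/

import Mathlib

open MeasureTheory Filter
open scoped ENNReal

namespace Stmt3Aux

variable {X : Type*} [MeasurableSpace X] {μ : Measure X}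

lemma const_of_ae_ae (hμ0 : μ ≠ 0) {F : X → ℝ}
    (h : ∀ᵐ x ∂μ, ∀ᵐ y ∂μ, F x = F y) : ∃ c, ∀ᵐ x ∂μ, F x = c := by
  haveI : (ae μ).NeBot := ae_neBot.2 hμ0
  obtain ⟨x₀, hx⟩ := h.exists
  exact ⟨F x₀, hx.mono fun y hy => hy.symm⟩

lemma lint_const_ae {g : X → ℝ} {c : ℝ} (h : ∀ᵐ x ∂μ, g x = c) :
    ∫⁻ x, ENNReal.ofReal (g x) ∂μ = ENNReal.ofReal c * μ Set.univ := by
  rw [lintegral_congr_ae (h.mono fun x hx => congrArg ENNReal.ofReal hx :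
    (fun x => ENNReal.ofReal (g x)) =ᵐ[μ] fun _ => ENNReal.ofReal c)]
  exact lintegral_const _

lemma pair_key [IsFiniteMeasure μ] {a b : X → ℝ} (hma : Measurable a) (hmb : Measurable b)
    (hna : ∀ x, 0 ≤ a x) (hnb : ∀ x, 0 ≤ b x)
    (hcorr : ∀ᵐ p ∂(μ.prod μ), 0 ≤ (a p.1 - a p.2) * (b p.1 - b p.2)) :
    μ Set.univ * (∫⁻ x, ENNReal.ofReal (a x * b x) ∂μ)
        + μ Set.univ * (∫⁻ x, ENNReal.ofReal (a x * b x) ∂μ)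
      = ((∫⁻ x, ENNReal.ofReal (a x) ∂μ) * (∫⁻ x, ENNReal.ofReal (b x) ∂μ)
          + (∫⁻ x, ENNReal.ofReal (a x) ∂μ) * (∫⁻ x, ENNReal.ofReal (b x) ∂μ))
        + ∫⁻ p, ENNReal.ofReal ((a p.1 - a p.2) * (b p.1 - b p.2)) ∂(μ.prod μ) := by
  have m1 : Measurable fun p : X × X => ENNReal.ofReal (a p.1 * b p.1) :=
    ((hma.comp measurable_fst).mul (hmb.comp measurable_fst)).ennreal_ofReal
  have m3 : Measurable fun p : X × X => ENNReal.ofReal (a p.1 * b p.2) :=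
    ((hma.comp measurable_fst).mul (hmb.comp measurable_snd)).ennreal_ofReal
  have m4 : Measurable fun p : X × X => ENNReal.ofReal (a p.2 * b p.1) :=
    ((hma.comp measurable_snd).mul (hmb.comp measurable_fst)).ennreal_ofReal
  have expand : ∀ᵐ p ∂(μ.prod μ),
      ENNReal.ofReal (a p.1 * b p.1) + ENNReal.ofReal (a p.2 * b p.2)
        = (ENNReal.ofReal (a p.1 * b p.2) + ENNReal.ofReal (a p.2 * b p.1))
            + ENNReal.ofReal ((a p.1 - a p.2) * (b p.1 - b p.2)) := by
    filter_upwards [hcorr] with p hp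
    rw [← ENNReal.ofReal_add (mul_nonneg (hna _) (hnb _)) (mul_nonneg (hna _) (hnb _)),
      ← ENNReal.ofReal_add (mul_nonneg (hna _) (hnb _)) (mul_nonneg (hna _) (hnb _)),
      ← ENNReal.ofReal_add (add_nonneg (mul_nonneg (hna _) (hnb _))
        (mul_nonneg (hna _) (hnb _))) hp]
    exact congrArg ENNReal.ofReal (by ring)
  have E := lintegral_congr_ae expand
  rw [lintegral_add_left m1, lintegral_add_left (f := fun p : X × X =>
    ENNReal.ofReal (a p.1 * b p.2) + ENNReal.ofReal (a p.2 * b p.1)) (m3.add m4), lintegral_add_left m3] at E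
  have l1 : ∫⁻ p, ENNReal.ofReal (a p.1 * b p.1) ∂(μ.prod μ)
      = (∫⁻ x, ENNReal.ofReal (a x * b x) ∂μ) * μ Set.univ := by
    have h := lintegral_prod_mul (μ := μ) (ν := μ)
      (f := fun x => ENNReal.ofReal (a x * b x)) (g := fun _ : X => (1 : ℝ≥0∞))
      ((hma.mul hmb).ennreal_ofReal.aemeasurable) aemeasurable_const
    simpa using h
  have l2 : ∫⁻ p, ENNReal.ofReal (a p.2 * b p.2) ∂(μ.prod μ)
      = μ Set.univ * ∫⁻ x, ENNReal.ofReal (a x * b x) ∂μ := by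
    have h := lintegral_prod_mul (μ := μ) (ν := μ)
      (f := fun _ : X => (1 : ℝ≥0∞)) (g := fun x => ENNReal.ofReal (a x * b x))
      aemeasurable_const ((hma.mul hmb).ennreal_ofReal.aemeasurable)
    simpa using h
  have l3 : ∫⁻ p, ENNReal.ofReal (a p.1 * b p.2) ∂(μ.prod μ)
      = (∫⁻ x, ENNReal.ofReal (a x) ∂μ) * ∫⁻ x, ENNReal.ofReal (b x) ∂μ := by
    have h := lintegral_prod_mul (μ := μ) (ν := μ)
      (f := fun x => ENNReal.ofReal (a x)) (g := fun x => ENNReal.ofReal (b x))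
      hma.ennreal_ofReal.aemeasurable hmb.ennreal_ofReal.aemeasurable
    rw [← h]
    exact lintegral_congr fun p => ENNReal.ofReal_mul (hna p.1)
  have l4 : ∫⁻ p, ENNReal.ofReal (a p.2 * b p.1) ∂(μ.prod μ)
      = (∫⁻ x, ENNReal.ofReal (b x) ∂μ) * ∫⁻ x, ENNReal.ofReal (a x) ∂μ := by
    have h := lintegral_prod_mul (μ := μ) (ν := μ)
      (f := fun x => ENNReal.ofReal (b x)) (g := fun x => ENNReal.ofReal (a x))
      hmb.ennreal_ofReal.aemeasurable hma.ennreal_ofReal.aemeasurable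
    rw [← h]
    exact lintegral_congr fun p => by
      rw [mul_comm (a p.2) (b p.1), ENNReal.ofReal_mul (hnb p.1)]
  rw [l1, l2, l3, l4] at E
  calc μ Set.univ * (∫⁻ x, ENNReal.ofReal (a x * b x) ∂μ)
        + μ Set.univ * (∫⁻ x, ENNReal.ofReal (a x * b x) ∂μ)
      = (∫⁻ x, ENNReal.ofReal (a x * b x) ∂μ) * μ Set.univ
        + μ Set.univ * (∫⁻ x, ENNReal.ofReal (a x * b x) ∂μ) := by ring
    _ = ((∫⁻ x, ENNReal.ofReal (a x) ∂μ) * (∫⁻ x, ENNReal.ofReal (b x) ∂μ)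
          + (∫⁻ x, ENNReal.ofReal (b x) ∂μ) * (∫⁻ x, ENNReal.ofReal (a x) ∂μ))
        + ∫⁻ p, ENNReal.ofReal ((a p.1 - a p.2) * (b p.1 - b p.2)) ∂(μ.prod μ) := E
    _ = _ := by ring

lemma pair_le [IsFiniteMeasure μ] {a b : X → ℝ} (hma : Measurable a) (hmb : Measurable b)
    (hna : ∀ x, 0 ≤ a x) (hnb : ∀ x, 0 ≤ b x)
    (hcorr : ∀ᵐ p ∂(μ.prod μ), 0 ≤ (a p.1 - a p.2) * (b p.1 - b p.2)) :
    (∫⁻ x, ENNReal.ofReal (a x) ∂μ) * (∫⁻ x, ENNReal.ofReal (b x) ∂μ)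
      ≤ μ Set.univ * ∫⁻ x, ENNReal.ofReal (a x * b x) ∂μ := by
  have key := pair_key hma hmb hna hnb hcorr
  by_contra h
  push_neg at h
  exact absurd (by rw [key]; exact le_self_add) (not_le.2 (ENNReal.add_lt_add h h))

lemma pair_eq [IsFiniteMeasure μ] (hμ0 : μ ≠ 0) {a b : X → ℝ}
    (hma : Measurable a) (hmb : Measurable b)
    (hna : ∀ x, 0 ≤ a x) (hnb : ∀ x, 0 ≤ b x)
    (hcorr : ∀ᵐ p ∂(μ.prod μ), 0 ≤ (a p.1 - a p.2) * (b p.1 - b p.2))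
    (hAt : (∫⁻ x, ENNReal.ofReal (a x) ∂μ) ≠ ⊤) (hBt : (∫⁻ x, ENNReal.ofReal (b x) ∂μ) ≠ ⊤)
    (heq : μ Set.univ * (∫⁻ x, ENNReal.ofReal (a x * b x) ∂μ)
      = (∫⁻ x, ENNReal.ofReal (a x) ∂μ) * ∫⁻ x, ENNReal.ofReal (b x) ∂μ) :
    (∃ c, ∀ᵐ x ∂μ, a x = c) ∨ ∃ c, ∀ᵐ x ∂μ, b x = c := by
  have mD : Measurable fun p : X × X =>
      ENNReal.ofReal ((a p.1 - a p.2) * (b p.1 - b p.2)) :=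
    (((hma.comp measurable_fst).sub (hma.comp measurable_snd)).mul
      ((hmb.comp measurable_fst).sub (hmb.comp measurable_snd))).ennreal_ofReal
  have key := pair_key hma hmb hna hnb hcorr
  rw [heq] at key
  set S := (∫⁻ x, ENNReal.ofReal (a x) ∂μ) * ∫⁻ x, ENNReal.ofReal (b x) ∂μ with hS
  have hSfin : S + S ≠ ⊤ :=
    ENNReal.add_ne_top.2 ⟨ENNReal.mul_ne_top hAt hBt, ENNReal.mul_ne_top hAt hBt⟩
  have hD : ∫⁻ p, ENNReal.ofReal ((a p.1 - a p.2) * (b p.1 - b p.2)) ∂(μ.prod μ) = 0 :=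
    ((ENNReal.add_right_inj hSfin).1 (by rw [add_zero]; exact key)).symm
  have hD0 := (lintegral_eq_zero_iff mD).1 hD
  have hzero : ∀ᵐ p ∂(μ.prod μ), (a p.1 - a p.2) * (b p.1 - b p.2) = 0 := by
    filter_upwards [hD0, hcorr] with p h1 h2
    exact le_antisymm (ENNReal.ofReal_eq_zero.1 h1) h2
  have hit : ∀ᵐ x ∂μ, ∀ᵐ y ∂μ, a x = a y ∨ b x = b y := by
    refine (Measure.ae_ae_of_ae_prod hzero).mono fun x hx => hx.mono fun y hy => ?_
    rcases mul_eq_zero.1 hy with h | h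
    exacts [Or.inl (sub_eq_zero.1 h), Or.inr (sub_eq_zero.1 h)]
  by_cases hac : ∃ c, ∀ᵐ x ∂μ, a x = c
  · exact Or.inl hac
  · right
    apply const_of_ae_ae hμ0
    filter_upwards [hit] with x Hx
    filter_upwards [hit, Hx] with y Hy Hxy
    have hfreq : ∃ᵐ z ∂μ, a z ≠ a x := by
      by_contra h
      rw [Filter.not_frequently] at h
      exact hac ⟨a x, h.mono fun z hz => not_not.1 hz⟩
    obtain ⟨z, hz, Hxz, Hyz⟩ := (hfreq.and_eventually (Hx.and Hy)).exists
    have hbx : b x = b z := Hxz.resolve_left fun h => hz h.symm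
    rcases Hxy with h | h
    · have hby : b y = b z := Hyz.resolve_left fun h' => hz (h.trans h').symm
      rw [hbx, hby]
    · exact h

lemma corr_prod {ι : Type*} [Fintype ι] {f : ι → X → ℝ} {b : X → ℝ}
    (hnonneg : ∀ i x, 0 ≤ f i x)
    (hcorr : ∀ i, ∀ᵐ p ∂(μ.prod μ), 0 ≤ (f i p.1 - f i p.2) * (b p.1 - b p.2)) :
    ∀ᵐ p ∂(μ.prod μ), 0 ≤ ((∏ i, f i p.1) - ∏ i, f i p.2) * (b p.1 - b p.2) := by
  have hall : ∀ᵐ p ∂(μ.prod μ), ∀ i, 0 ≤ (f i p.1 - f i p.2) * (b p.1 - b p.2) :=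
    ae_all_iff.2 hcorr
  filter_upwards [hall] with p hp
  rcases lt_trichotomy (b p.1) (b p.2) with h | h | h
  · have hle : ∀ i, f i p.1 ≤ f i p.2 := fun i => by nlinarith [hp i]
    have hprod : (∏ i, f i p.1) ≤ ∏ i, f i p.2 :=
      Finset.prod_le_prod (fun i _ => hnonneg i p.1) fun i _ => hle i
    nlinarith
  · simp [h]
  · have hle : ∀ i, f i p.2 ≤ f i p.1 := fun i => by nlinarith [hp i]
    have hprod : (∏ i, f i p.2) ≤ ∏ i, f i p.1 :=
      Finset.prod_le_prod (fun i _ => hnonneg i p.2) fun i _ => hle i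
    nlinarith

lemma const_of_prod_const {n : ℕ} (hμ0 : μ ≠ 0) [SFinite μ] {f : Fin n → X → ℝ}
    (hnonneg : ∀ i x, 0 ≤ f i x)
    (hcorr : ∀ i j, ∀ᵐ p ∂(μ.prod μ), 0 ≤ (f i p.1 - f i p.2) * (f j p.1 - f j p.2))
    {c : ℝ} (hc : 0 < c) (hgc : ∀ᵐ x ∂μ, (∏ i, f i x) = c) :
    ∀ i, ∃ d, ∀ᵐ x ∂μ, f i x = d := by
  have hcorr' : ∀ᵐ x ∂μ, ∀ᵐ y ∂μ, ∀ i j, 0 ≤ (f i x - f i y) * (f j x - f j y) :=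
    Measure.ae_ae_of_ae_prod (ae_all_iff.2 fun i => ae_all_iff.2 fun j => hcorr i j)
  have pos : ∀ z : X, (∏ i, f i z) = c → ∀ l, 0 < f l z := by
    intro z hz l
    rcases (hnonneg l z).lt_or_eq with h | h
    · exact h
    · exfalso
      rw [Finset.prod_eq_zero (Finset.mem_univ l) h.symm] at hz
      exact hc.ne' hz.symm
  intro i
  apply const_of_ae_ae hμ0
  filter_upwards [hcorr', hgc] with x Hx hx
  filter_upwards [Hx, hgc] with y Kxy hy
  have h1 : ¬ f i y < f i x := by
    intro hlt
    have hge : ∀ l, f l y ≤ f l x := fun l => by nlinarith [Kxy l i]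
    have : (∏ l, f l y) < ∏ l, f l x :=
      Finset.prod_lt_prod (fun l _ => pos y hy l) (fun l _ => hge l)
        ⟨i, Finset.mem_univ i, hlt⟩
    rw [hx, hy] at this
    exact lt_irrefl c this
  have h2 : ¬ f i x < f i y := by
    intro hlt
    have hge : ∀ l, f l x ≤ f l y := fun l => by nlinarith [Kxy l i]
    have : (∏ l, f l x) < ∏ l, f l y :=
      Finset.prod_lt_prod (fun l _ => pos x hx l) (fun l _ => hge l)
        ⟨i, Finset.mem_univ i, hlt⟩
    rw [hx, hy] at this
    exact lt_irrefl c this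
  exact le_antisymm (not_lt.1 h1) (not_lt.1 h2)

theorem ineq_aux [IsFiniteMeasure μ] (n : ℕ) :
    ∀ f : Fin (n + 1) → X → ℝ, (∀ i, Measurable (f i)) → (∀ i x, 0 ≤ f i x) →
    (∀ i j, ∀ᵐ p ∂(μ.prod μ), 0 ≤ (f i p.1 - f i p.2) * (f j p.1 - f j p.2)) →
    (∏ i, ∫⁻ x, ENNReal.ofReal (f i x) ∂μ)
      ≤ μ Set.univ ^ n * ∫⁻ x, ENNReal.ofReal (∏ i, f i x) ∂μ := by
  induction n with
  | zero => intro f hm hn hc; simp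
  | succ n ih =>
    intro f hm hn hc
    have hmg : Measurable fun x => ∏ i : Fin (n + 1), f i.castSucc x :=
      Finset.measurable_prod _ fun i _ => hm i.castSucc
    have hng : ∀ x, 0 ≤ ∏ i : Fin (n + 1), f i.castSucc x := fun x =>
      Finset.prod_nonneg fun i _ => hn _ x
    have hcg : ∀ᵐ p ∂(μ.prod μ),
        0 ≤ ((∏ i : Fin (n + 1), f i.castSucc p.1) - ∏ i : Fin (n + 1), f i.castSucc p.2)
          * (f (Fin.last (n + 1)) p.1 - f (Fin.last (n + 1)) p.2) :=
      corr_prod (fun i x => hn _ x) fun i => hc i.castSucc (Fin.last (n + 1))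
    calc (∏ i : Fin (n + 2), ∫⁻ x, ENNReal.ofReal (f i x) ∂μ)
        = (∏ i : Fin (n + 1), ∫⁻ x, ENNReal.ofReal (f i.castSucc x) ∂μ)
            * ∫⁻ x, ENNReal.ofReal (f (Fin.last (n + 1)) x) ∂μ :=
          Fin.prod_univ_castSucc _
      _ ≤ (μ Set.univ ^ n * ∫⁻ x, ENNReal.ofReal (∏ i : Fin (n + 1), f i.castSucc x) ∂μ)
            * ∫⁻ x, ENNReal.ofReal (f (Fin.last (n + 1)) x) ∂μ :=
          mul_le_mul_left
            (ih (fun i => f i.castSucc) (fun i => hm _) (fun i x => hn _ x)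
              fun i j => hc _ _) _
      _ = μ Set.univ ^ n * ((∫⁻ x, ENNReal.ofReal (∏ i : Fin (n + 1), f i.castSucc x) ∂μ)
            * ∫⁻ x, ENNReal.ofReal (f (Fin.last (n + 1)) x) ∂μ) := by ring
      _ ≤ μ Set.univ ^ n * (μ Set.univ * ∫⁻ x, ENNReal.ofReal
            ((∏ i : Fin (n + 1), f i.castSucc x) * f (Fin.last (n + 1)) x) ∂μ) :=
          mul_le_mul_right (pair_le hmg (hm _) hng (hn _) hcg) _
      _ = μ Set.univ ^ (n + 1) * ∫⁻ x, ENNReal.ofReal (∏ i : Fin (n + 2), f i x) ∂μ := by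
          rw [show (fun x => ENNReal.ofReal (∏ i : Fin (n + 2), f i x))
              = fun x => ENNReal.ofReal
                ((∏ i : Fin (n + 1), f i.castSucc x) * f (Fin.last (n + 1)) x) from
            funext fun x => by rw [Fin.prod_univ_castSucc]]
          ring

theorem eq_aux [IsFiniteMeasure μ] (hμ0 : μ ≠ 0) (n : ℕ) :
    ∀ f : Fin (n + 1) → X → ℝ, (∀ i, Measurable (f i)) → (∀ i x, 0 ≤ f i x) →
    (∀ i j, ∀ᵐ p ∂(μ.prod μ), 0 ≤ (f i p.1 - f i p.2) * (f j p.1 - f j p.2)) →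
    (∀ i, 0 < ∫⁻ x, ENNReal.ofReal (f i x) ∂μ) →
    (∀ i, (∫⁻ x, ENNReal.ofReal (f i x) ∂μ) < ⊤) →
    μ Set.univ ^ n * (∫⁻ x, ENNReal.ofReal (∏ i, f i x) ∂μ)
      = (∏ i, ∫⁻ x, ENNReal.ofReal (f i x) ∂μ) →
    ∃ i₀, ∀ i ≠ i₀, ∃ c : ℝ, ∀ᵐ x ∂μ, f i x = c := by
  induction n with
  | zero =>
    intro f _ _ _ _ _ _
    exact ⟨0, fun i hi => absurd (Fin.ext (Nat.lt_one_iff.mp i.isLt)) hi⟩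
  | succ n ih =>
    intro f hm hn hc hpos hfin heq
    have hmg : Measurable fun x => ∏ i : Fin (n + 1), f i.castSucc x :=
      Finset.measurable_prod _ fun i _ => hm i.castSucc
    have hng : ∀ x, 0 ≤ ∏ i : Fin (n + 1), f i.castSucc x := fun x =>
      Finset.prod_nonneg fun i _ => hn _ x
    have hcg : ∀ᵐ p ∂(μ.prod μ),
        0 ≤ ((∏ i : Fin (n + 1), f i.castSucc p.1) - ∏ i : Fin (n + 1), f i.castSucc p.2)
          * (f (Fin.last (n + 1)) p.1 - f (Fin.last (n + 1)) p.2) :=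
      corr_prod (fun i x => hn _ x) fun i => hc i.castSucc (Fin.last (n + 1))
    set M := μ Set.univ with hMdef
    set A := ∫⁻ x, ENNReal.ofReal (∏ i : Fin (n + 1), f i.castSucc x) ∂μ with hAdef
    set B := ∫⁻ x, ENNReal.ofReal (f (Fin.last (n + 1)) x) ∂μ with hBdef
    set C := ∫⁻ x, ENNReal.ofReal
      ((∏ i : Fin (n + 1), f i.castSucc x) * f (Fin.last (n + 1)) x) ∂μ with hCdef
    set P := ∏ i : Fin (n + 1), ∫⁻ x, ENNReal.ofReal (f i.castSucc x) ∂μ with hPdef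
    have hM0 : M ≠ 0 := fun h => hμ0 (Measure.measure_univ_eq_zero.mp h)
    have hMt : M ≠ ⊤ := measure_ne_top μ _
    have hCeq : (∫⁻ x, ENNReal.ofReal (∏ i : Fin (n + 2), f i x) ∂μ) = C :=
      lintegral_congr fun x => by rw [Fin.prod_univ_castSucc]
    have hRHS : (∏ i : Fin (n + 2), ∫⁻ x, ENNReal.ofReal (f i x) ∂μ) = P * B :=
      Fin.prod_univ_castSucc _
    rw [hCeq, hRHS] at heq
    have hPt : P ≠ ⊤ := ENNReal.prod_ne_top fun i _ => (hfin _).ne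
    have hP0 : P ≠ 0 := (CanonicallyOrderedAdd.prod_pos.2 fun i _ => hpos _).ne'
    have hB0 : B ≠ 0 := (hpos _).ne'
    have hBt : B ≠ ⊤ := (hfin _).ne
    have i1 : A * B ≤ M * C := pair_le hmg (hm _) hng (hn _) hcg
    have i2 : P ≤ M ^ n * A :=
      ineq_aux n (fun i => f i.castSucc) (fun i => hm _) (fun i x => hn _ x)
        fun i j => hc _ _
    have e2 : M ^ n * (M * C) = P * B := by rw [show M ^ n * (M * C) = M ^ (n + 1) * C by ring, heq]
    have e1 : M ^ n * (A * B) = P * B :=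
      le_antisymm ((mul_le_mul_right i1 _).trans e2.le)
        ((mul_le_mul_left i2 B).trans (mul_assoc _ _ _).le)
    have hMn0 : M ^ n ≠ 0 := pow_ne_zero _ hM0
    have hMnt : M ^ n ≠ ⊤ := ENNReal.pow_ne_top hMt
    have eAB : A * B = M * C := (ENNReal.mul_right_inj hMn0 hMnt).1 (e1.trans e2.symm)
    have ePA : P = M ^ n * A := by
      have h' : M ^ n * A * B = P * B := by rw [mul_assoc]; exact e1
      exact ((ENNReal.mul_left_inj hB0 hBt).1 h').symm
    have hA_t : A ≠ ⊤ := by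
      intro h
      rw [h, ENNReal.mul_top hMn0] at ePA
      exact hPt ePA
    have hA0 : A ≠ 0 := by
      intro h
      rw [h, mul_zero] at ePA
      exact hP0 ePA
    rcases pair_eq hμ0 hmg (hm _) hng (hn _) hcg hA_t hBt eAB.symm with ⟨c, hgconst⟩ | ⟨c, hbconst⟩
    · have hAc : A = ENNReal.ofReal c * M := lint_const_ae hgconst
      have hc0 : 0 < c := by
        rcases le_or_gt c 0 with h | h
        · exfalso
          apply hA0
          rw [hAc, ENNReal.ofReal_eq_zero.2 h, zero_mul]
        · exact h
      have hall := const_of_prod_const hμ0 (f := fun i : Fin (n + 1) => f i.castSucc)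
        (fun i x => hn _ x) (fun i j => hc _ _) hc0 hgconst
      refine ⟨Fin.last (n + 1), fun i hi => ?_⟩
      rcases Fin.eq_castSucc_or_eq_last i with ⟨j, rfl⟩ | rfl
      · exact hall j
      · exact absurd rfl hi
    · obtain ⟨i₀, hi₀⟩ := ih (fun i => f i.castSucc) (fun i => hm _) (fun i x => hn _ x)
        (fun i j => hc _ _) (fun i => hpos _) (fun i => hfin _) ePA.symm
      refine ⟨i₀.castSucc, fun i hi => ?_⟩
      rcases Fin.eq_castSucc_or_eq_last i with ⟨j, rfl⟩ | rfl
      · exact hi₀ j fun h => hi (by rw [h])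
      · exact ⟨c, hbconst⟩

lemma bwd [IsFiniteMeasure μ] {k : ℕ} (f : Fin k → X → ℝ) (hm : ∀ i, Measurable (f i))
    (i₀ : Fin k) (h : ∀ i ≠ i₀, ∃ c : ℝ, ∀ᵐ x ∂μ, f i x = c) :
    μ Set.univ ^ (k - 1) * ∫⁻ x, ∏ i, ENNReal.ofReal (f i x) ∂μ
      = ∏ i, ∫⁻ x, ENNReal.ofReal (f i x) ∂μ := by
  classical
  have h' : ∀ i, ∃ c : ℝ, i ≠ i₀ → ∀ᵐ x ∂μ, f i x = c := by
    intro i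
    by_cases hii : i = i₀
    · exact ⟨0, fun hne => absurd hii hne⟩
    · obtain ⟨c, hc⟩ := h i hii
      exact ⟨c, fun _ => hc⟩
  choose c hc using h'
  have hae : ∀ᵐ x ∂μ, ∀ i, i ≠ i₀ → f i x = c i := by
    rw [ae_all_iff]
    intro i
    by_cases hii : i = i₀
    · exact Eventually.of_forall fun x hne => absurd hii hne
    · exact (hc i hii).mono fun x hx _ => hx
  have hLHS : (∫⁻ x, ∏ i, ENNReal.ofReal (f i x) ∂μ)
      = (∫⁻ x, ENNReal.ofReal (f i₀ x) ∂μ)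
        * ∏ i ∈ Finset.univ.erase i₀, ENNReal.ofReal (c i) := by
    rw [← lintegral_mul_const _ (hm i₀).ennreal_ofReal]
    refine lintegral_congr_ae (hae.mono fun x hx => ?_)
    show (∏ i, ENNReal.ofReal (f i x))
      = ENNReal.ofReal (f i₀ x) * ∏ i ∈ Finset.univ.erase i₀, ENNReal.ofReal (c i)
    rw [← Finset.mul_prod_erase Finset.univ _ (Finset.mem_univ i₀)]
    congr 1
    exact Finset.prod_congr rfl fun i hi => by rw [hx i (Finset.ne_of_mem_erase hi)]
  have hRHS : (∏ i, ∫⁻ x, ENNReal.ofReal (f i x) ∂μ)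
      = (∫⁻ x, ENNReal.ofReal (f i₀ x) ∂μ)
        * ((∏ i ∈ Finset.univ.erase i₀, ENNReal.ofReal (c i)) * μ Set.univ ^ (k - 1)) := by
    rw [← Finset.mul_prod_erase Finset.univ _ (Finset.mem_univ i₀)]
    congr 1
    rw [Finset.prod_congr rfl fun i hi => lint_const_ae (hc i (Finset.ne_of_mem_erase hi)),
      Finset.prod_mul_distrib, Finset.prod_const,
      Finset.card_erase_of_mem (Finset.mem_univ i₀)]
    simp
  rw [hLHS, hRHS]
  ring

end Stmt3Aux

/-- **Equality case for `k` nonnegative correlated functions** (Theorem 3.1(2), equality part).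
For a finite measure `μ` and nonnegative measurable, `μ`-a.e. pairwise correlated functions
`f₁, …, f_k` with `0 < ∫ f_i dμ < ∞` for each `i`, equality
`μ(X)^(k-1) ∫ ∏ f_i dμ = ∏ ∫ f_i dμ` holds iff at least `k - 1` of the functions are
`μ`-a.e. constant. -/
theorem stmt_3 {X : Type*} [MeasurableSpace X] (μ : Measure X)
    (hμ : μ Set.univ < ⊤) (k : ℕ) (hk : 1 ≤ k)
    (f : Fin k → X → ℝ) (hmeas : ∀ i, Measurable (f i))
    (hnonneg : ∀ i x, 0 ≤ f i x)
    (hcorr : ∀ i j, ∀ᵐ p ∂(μ.prod μ),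
      0 ≤ (f i p.1 - f i p.2) * (f j p.1 - f j p.2))
    (hpos : ∀ i, 0 < ∫⁻ x, ENNReal.ofReal (f i x) ∂μ)
    (hfin : ∀ i, ∫⁻ x, ENNReal.ofReal (f i x) ∂μ < ⊤) :
    (μ Set.univ) ^ (k - 1) * ∫⁻ x, ∏ i, ENNReal.ofReal (f i x) ∂μ =
        ∏ i, ∫⁻ x, ENNReal.ofReal (f i x) ∂μ ↔
      ∃ i₀ : Fin k, ∀ i ≠ i₀, ∃ c : ℝ, ∀ᵐ x ∂μ, f i x = c := by
  haveI : IsFiniteMeasure μ := ⟨hμ⟩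
  have hμ0 : μ ≠ 0 := by
    intro h
    have h2 := hpos ⟨0, hk⟩
    rw [h] at h2
    simp at h2
  constructor
  · intro heq
    obtain ⟨n, rfl⟩ : ∃ n, k = n + 1 := ⟨k - 1, by omega⟩
    have hprodeq : (∫⁻ x, ∏ i, ENNReal.ofReal (f i x) ∂μ)
        = ∫⁻ x, ENNReal.ofReal (∏ i, f i x) ∂μ :=
      lintegral_congr fun x => (ENNReal.ofReal_prod_of_nonneg fun i _ => hnonneg i x).symm
    rw [hprodeq] at heq
    exact Stmt3Aux.eq_aux hμ0 n f hmeas hnonneg hcorr hpos hfin (by simpa using heq)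
  · rintro ⟨i₀, h⟩
    exact Stmt3Aux.bwd f hmeas i₀ h
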